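/- For every real y > 0, K₀(y) < 1.7·y^{−7/2}, i.e. (1/2)·∫₀^∞ exp(−t − y²/(4t))·dt/t < 1.7·y^{−7/2}. -/

import Mathlib

open Real MeasureTheory Set Filter

set_option maxHeartbeats 1000000 in
theorem besselK0_bound_two (y : ℝ) (hy : 0 < y) :
    (1 / 2) * ∫ t in Set.Ioi (0 : ℝ), Real.exp (-t - y ^ 2 / (4 * t)) / t <
      1.7 * y ^ (-(7 : ℝ) / 2) := by
  have hsy : 0 < Real.sqrt y := Real.sqrt_pos.2 hy
  set u : ℝ → ℝ := fun t => Real.sqrt t - y / (2 * Real.sqrt t) with hu_def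
  set u' : ℝ → ℝ := fun t => 1 / (2 * Real.sqrt t) + y / (4 * t * Real.sqrt t) with hu'_def
  set g : ℝ → ℝ := fun t => Real.exp (-(u t) ^ 2) * u' t with hg_def
  set c : ℝ := ∫ s in Iic (0:ℝ), Real.exp (-s ^ 2) with hc_def
  set F : ℝ → ℝ := fun v => c + ∫ s in (0:ℝ)..v, Real.exp (-s ^ 2) with hF_def
  set G : ℝ → ℝ := fun t => if t = 0 then 0 else F (u t) with hG_def
  have hG0 : G 0 = 0 := by rw [hG_def]; norm_num
  have hGpos : ∀ t : ℝ, t ≠ 0 → G t = F (u t) := by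
    intro t ht; rw [hG_def]; simp only [if_neg ht]
  have hcont_gauss : Continuous fun s : ℝ => Real.exp (-s ^ 2) := by continuity
  have hint_gauss : Integrable fun s : ℝ => Real.exp (-s ^ 2) := by
    have := integrable_exp_neg_mul_sq (b := 1) one_pos
    simpa using this
  have hc_val : c = Real.sqrt π / 2 := by
    have h1 : (∫ s in Iic (0:ℝ), Real.exp (-(-s) ^ 2)) = ∫ s in Ioi (-(0:ℝ)), Real.exp (-s ^ 2) :=
      integral_comp_neg_Iic (0:ℝ) (fun s => Real.exp (-s ^ 2))
    have h2 : (∫ s in Ioi (0:ℝ), Real.exp (-s ^ 2)) = Real.sqrt π / 2 := by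
      have := integral_gaussian_Ioi (1:ℝ)
      simpa using this
    simp only [neg_zero, neg_sq] at h1
    rw [hc_def, h1, h2]
  have hF_deriv : ∀ v : ℝ, HasDerivAt F (Real.exp (-v ^ 2)) v := by
    intro v
    exact ((hcont_gauss.integral_hasStrictDerivAt 0 v).hasDerivAt).const_add c
  have hu_deriv : ∀ t ∈ Ioi (0:ℝ), HasDerivAt u (u' t) t := by
    intro t ht
    have ht' : (0:ℝ) < t := ht
    obtain ⟨s, hs0, rfl⟩ : ∃ s : ℝ, 0 < s ∧ s ^ 2 = t :=
      ⟨Real.sqrt t, Real.sqrt_pos.2 ht', Real.sq_sqrt ht'.le⟩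
    have hss : Real.sqrt (s ^ 2) = s := Real.sqrt_sq hs0.le
    have h1 : HasDerivAt Real.sqrt (1 / (2 * s)) (s ^ 2) := by
      have := Real.hasDerivAt_sqrt (show s ^ 2 ≠ 0 by positivity)
      rwa [hss] at this
    have h2 : HasDerivAt (fun w : ℝ => y * (2 * Real.sqrt w)⁻¹)
        (y * (-(2 * (1 / (2 * s))) / (2 * s) ^ 2)) (s ^ 2) := by
      have h2a := ((h1.const_mul 2).inv (by positivity)).const_mul y
      rw [hss] at h2a
      exact h2a
    have h4 : HasDerivAt u
        (1 / (2 * s) - y * (-(2 * (1 / (2 * s))) / (2 * s) ^ 2)) (s ^ 2) := by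
      refine (h1.sub h2).congr_of_eventuallyEq ?_
      filter_upwards [] with w
      rw [hu_def]
      simp only [div_eq_mul_inv]
      rfl
    convert h4 using 1
    rw [hu'_def]
    simp only [hss]
    field_simp
    ring
  have hG_deriv : ∀ t ∈ Ioi (0:ℝ), HasDerivAt G (g t) t := by
    intro t ht
    have ht' : (0:ℝ) < t := ht
    have h1 : HasDerivAt (fun s => F (u s)) (g t) t := by
      have := (hF_deriv (u t)).comp t (hu_deriv t ht)
      rw [hg_def]
      exact this
    apply h1.congr_of_eventuallyEq
    filter_upwards [eventually_ne_nhds ht'.ne'] with s hs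
    exact hGpos s hs
  have hg_nonneg : ∀ t ∈ Ioi (0:ℝ), 0 ≤ g t := by
    intro t ht
    have ht' : (0:ℝ) < t := ht
    have hst : 0 < Real.sqrt t := Real.sqrt_pos.2 ht'
    have : 0 ≤ u' t := by rw [hu'_def]; positivity
    exact mul_nonneg (Real.exp_pos _).le this
  have hsqrt0 : Tendsto (fun t : ℝ => Real.sqrt t) (nhdsWithin 0 (Ioi 0)) (nhds 0) := by
    have := Real.continuous_sqrt.tendsto 0
    rw [Real.sqrt_zero] at this
    exact this.mono_left nhdsWithin_le_nhds
  have hG_cont : ContinuousWithinAt G (Ici (0:ℝ)) 0 := by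
    have h0 : Ici (0:ℝ) = insert 0 (Ioi 0) := by
      ext x; simp [le_iff_lt_or_eq, or_comm, eq_comm]
    rw [h0, continuousWithinAt_insert_self]
    rw [ContinuousWithinAt, hG0]
    have hsqrt0' : Tendsto (fun t : ℝ => Real.sqrt t) (nhdsWithin 0 (Ioi 0))
        (nhdsWithin 0 (Ioi 0)) := by
      apply tendsto_nhdsWithin_of_tendsto_nhds_of_eventually_within _ hsqrt0
      filter_upwards [self_mem_nhdsWithin] with t ht
      exact Real.sqrt_pos.2 ht
    have hu_bot : Tendsto u (nhdsWithin 0 (Ioi 0)) atBot := by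
      have hinv : Tendsto (fun t : ℝ => (Real.sqrt t)⁻¹) (nhdsWithin 0 (Ioi 0)) atTop :=
        tendsto_inv_nhdsGT_zero.comp hsqrt0'
      have h5 : Tendsto (fun t : ℝ => (y/2) * (Real.sqrt t)⁻¹) (nhdsWithin 0 (Ioi 0)) atTop :=
        hinv.const_mul_atTop (by positivity)
      have h6 : Tendsto (fun t : ℝ => -((y/2) * (Real.sqrt t)⁻¹)) (nhdsWithin 0 (Ioi 0)) atBot :=
        tendsto_neg_atTop_atBot.comp h5
      have h7 : Tendsto (fun t : ℝ => Real.sqrt t + -((y/2) * (Real.sqrt t)⁻¹))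
          (nhdsWithin 0 (Ioi 0)) atBot := by
        refine tendsto_atBot_add_left_of_ge' _ (1:ℝ) ?_ h6
        filter_upwards [hsqrt0.eventually (eventually_le_nhds (by norm_num : (0:ℝ) < 1))] with t ht
        exact ht
      refine h7.congr (fun t => ?_)
      rw [hu_def]
      simp only
      ring
    have hF_bot : Tendsto F atBot (nhds 0) := by
      have h1 : Tendsto (fun v => ∫ s in v..(0:ℝ), Real.exp (-s ^ 2)) atBot (nhds c) :=
        intervalIntegral_tendsto_integral_Iic 0 hint_gauss.integrableOn tendsto_id
      have h2 := h1.const_sub c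
      rw [sub_self] at h2
      apply h2.congr
      intro v
      rw [hF_def]
      simp only
      rw [intervalIntegral.integral_symm]
      ring
    have : Tendsto (fun t => F (u t)) (nhdsWithin 0 (Ioi 0)) (nhds 0) := hF_bot.comp hu_bot
    apply this.congr'
    filter_upwards [self_mem_nhdsWithin] with t ht
    exact (hGpos t (ne_of_gt (show (0:ℝ) < t from ht))).symm
  have hG_top : Tendsto G atTop (nhds (Real.sqrt π)) := by
    have hsqrt_top : Tendsto (fun t : ℝ => Real.sqrt t) atTop atTop := by
      apply tendsto_atTop_atTop.2
      intro b
      exact ⟨b ^ 2, fun a ha => by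
        calc b ≤ |b| := le_abs_self b
        _ = Real.sqrt (b ^ 2) := (Real.sqrt_sq_eq_abs b).symm
        _ ≤ Real.sqrt a := Real.sqrt_le_sqrt ha⟩
    have hu_top : Tendsto u atTop atTop := by
      have hinv : Tendsto (fun t : ℝ => (Real.sqrt t)⁻¹) atTop (nhds 0) :=
        tendsto_inv_atTop_zero.comp hsqrt_top
      have h5 : Tendsto (fun t : ℝ => -((y/2) * (Real.sqrt t)⁻¹)) atTop (nhds (-((y/2) * 0))) :=
        ((hinv.const_mul (y/2)).neg)
      have h7 : Tendsto (fun t : ℝ => Real.sqrt t + -((y/2) * (Real.sqrt t)⁻¹)) atTop atTop := by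
        refine tendsto_atTop_add_right_of_le' _ (-1:ℝ) hsqrt_top ?_
        have hlt : (-1 : ℝ) < -((y/2) * 0) := by norm_num
        filter_upwards [h5.eventually (eventually_ge_nhds hlt)] with t ht
        exact ht
      refine h7.congr (fun t => ?_)
      rw [hu_def]; simp only; ring
    have h1 : Tendsto (fun v => ∫ s in (0:ℝ)..v, Real.exp (-s ^ 2)) atTop
        (nhds (∫ s in Ioi (0:ℝ), Real.exp (-s ^ 2))) :=
      intervalIntegral_tendsto_integral_Ioi 0 hint_gauss.integrableOn tendsto_id
    have h3 : (∫ s in Ioi (0:ℝ), Real.exp (-s ^ 2)) = Real.sqrt π / 2 := by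
      have := integral_gaussian_Ioi (1:ℝ); simpa using this
    have h2 : Tendsto F atTop (nhds (Real.sqrt π)) := by
      have h4 := h1.const_add c
      rw [h3] at h4
      have h5 : c + Real.sqrt π / 2 = Real.sqrt π := by rw [hc_val]; ring
      rwa [h5] at h4
    have := h2.comp hu_top
    apply this.congr'
    filter_upwards [eventually_ne_atTop (0:ℝ)] with t ht
    exact (hGpos t ht).symm
  have hg_int : IntegrableOn g (Ioi (0:ℝ)) :=
    integrableOn_Ioi_deriv_of_nonneg hG_cont hG_deriv hg_nonneg hG_top
  have hg_val : (∫ t in Ioi (0:ℝ), g t) = Real.sqrt π := by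
    have h := integral_Ioi_of_hasDerivAt_of_nonneg hG_cont hG_deriv hg_nonneg hG_top
    rw [hG0, sub_zero] at h
    exact h
  -- pointwise bound
  set C : ℝ := Real.exp (-y) * (Real.sqrt 2 / Real.sqrt y) with hC_def
  have hC_pos : 0 < C := by rw [hC_def]; positivity
  have hf_le : ∀ t ∈ Ioi (0:ℝ), Real.exp (-t - y ^ 2 / (4 * t)) / t ≤ C * g t := by
    intro t ht
    have ht' : (0:ℝ) < t := ht
    obtain ⟨s, hs0, rfl⟩ : ∃ s : ℝ, 0 < s ∧ s ^ 2 = t :=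
      ⟨Real.sqrt t, Real.sqrt_pos.2 ht', Real.sq_sqrt ht'.le⟩
    have hss : Real.sqrt (s ^ 2) = s := Real.sqrt_sq hs0.le
    have hs2 : Real.sqrt 2 ^ 2 = 2 := Real.sq_sqrt (by norm_num)
    have hsy2 : Real.sqrt y ^ 2 = y := Real.sq_sqrt hy.le
    have hs2p : 0 < Real.sqrt 2 := Real.sqrt_pos.2 (by norm_num)
    have hu_val : u (s ^ 2) = s - y / (2 * s) := by rw [hu_def]; simp only [hss]
    have hu'_val : u' (s ^ 2) = 1 / (2 * s) + y / (4 * s ^ 2 * s) := by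
      rw [hu'_def]; simp only [hss]
    have hkey : -(s ^ 2) - y ^ 2 / (4 * s ^ 2) = -y + -(u (s ^ 2)) ^ 2 := by
      rw [hu_val]
      field_simp
      ring
    rw [hkey, Real.exp_add]
    have hineq : ((s:ℝ) ^ 2)⁻¹ ≤ Real.sqrt 2 / Real.sqrt y * u' (s ^ 2) := by
      rw [hu'_val]
      have hdiff : Real.sqrt 2 / Real.sqrt y * (1 / (2 * s) + y / (4 * s ^ 2 * s)) - (s ^ 2)⁻¹
          = (Real.sqrt 2 * (2 * s ^ 2 + y) - 4 * s * Real.sqrt y) / (4 * s ^ 3 * Real.sqrt y) := by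
        field_simp
        ring
      have hnum : 0 ≤ Real.sqrt 2 * (2 * s ^ 2 + y) - 4 * s * Real.sqrt y := by
        nlinarith [sq_nonneg (Real.sqrt 2 * s - Real.sqrt y), hs2, hsy2, hs2p.le, hs0.le]
      have : 0 ≤ Real.sqrt 2 / Real.sqrt y * (1 / (2 * s) + y / (4 * s ^ 2 * s)) - (s ^ 2)⁻¹ := by
        rw [hdiff]
        positivity
      linarith
    have hL : Real.exp (-y) * Real.exp (-(u (s ^ 2)) ^ 2) / s ^ 2
        = Real.exp (-y) * (Real.exp (-(u (s ^ 2)) ^ 2) * (s ^ 2)⁻¹) := by ring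
    have hR : C * g (s ^ 2)
        = Real.exp (-y) * (Real.exp (-(u (s ^ 2)) ^ 2) * (Real.sqrt 2 / Real.sqrt y * u' (s ^ 2))) := by
      rw [hC_def, hg_def]; ring
    rw [hL, hR]
    apply mul_le_mul_of_nonneg_left _ (Real.exp_pos _).le
    exact mul_le_mul_of_nonneg_left hineq (Real.exp_pos _).le
  -- compare integrals
  have hmono : (∫ t in Ioi (0:ℝ), Real.exp (-t - y ^ 2 / (4 * t)) / t)
      ≤ ∫ t in Ioi (0:ℝ), C * g t := by
    apply integral_mono_of_nonneg
    · rw [EventuallyLE, ae_restrict_iff' measurableSet_Ioi]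
      filter_upwards [] with t ht
      have ht' : (0:ℝ) < t := ht
      positivity
    · exact hg_int.const_mul C
    · rw [EventuallyLE, ae_restrict_iff' measurableSet_Ioi]
      filter_upwards [] with t ht
      exact hf_le t ht
  have hval : (∫ t in Ioi (0:ℝ), C * g t) = C * Real.sqrt π := by
    rw [MeasureTheory.integral_const_mul, hg_val]
  -- numeric conclusion
  have hnum : (1 / 2) * (C * Real.sqrt π) < 1.7 * y ^ (-(7 : ℝ) / 2) := by
    have hy3 : y ^ 3 * Real.exp (-y) ≤ 27 * Real.exp (-3) := by
      have h := Real.add_one_le_exp ((y - 3) / 3)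
      have h1 : y / 3 ≤ Real.exp ((y - 3) / 3) := by linarith
      have h2 : (y / 3) ^ 3 ≤ Real.exp ((y - 3) / 3) ^ 3 :=
        pow_le_pow_left₀ (by positivity) h1 3
      have h3 : Real.exp ((y - 3) / 3) ^ 3 = Real.exp (y - 3) := by
        rw [← Real.exp_nat_mul]
        congr 1
        push_cast
        ring
      have h4 : y ^ 3 ≤ 27 * Real.exp (y - 3) := by
        rw [← h3]; linarith [h2]
      have h5 : Real.exp (y - 3) * Real.exp (-y) = Real.exp (-3) := by
        rw [← Real.exp_add]
        congr 1
        ring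
      have h6 := mul_le_mul_of_nonneg_right h4 (Real.exp_pos (-y)).le
      rw [mul_assoc, h5] at h6
      exact h6
    have hs2lt : Real.sqrt 2 < 1.41422 := by
      nlinarith [Real.sq_sqrt (show (0:ℝ) ≤ 2 by norm_num), Real.sqrt_nonneg 2]
    have hsplt : Real.sqrt π < 1.77246 := by
      nlinarith [Real.sq_sqrt Real.pi_pos.le, Real.sqrt_nonneg π, Real.pi_lt_d6]
    have hexp3 : Real.exp (-3) < 0.049788 := by
      have h1 : (2.7182818283 : ℝ) < Real.exp 1 := Real.exp_one_gt_d9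
      have h2 : (20.0855 : ℝ) < Real.exp 3 := by
        have h3 : Real.exp 3 = Real.exp 1 ^ 3 := by
          rw [← Real.exp_nat_mul]
          norm_num
        have h5 : (2.7182818283:ℝ) ^ 3 < Real.exp 1 ^ 3 :=
          pow_lt_pow_left₀ h1 (by norm_num) (by norm_num)
        rw [h3]
        calc (20.0855 : ℝ) < 2.7182818283 ^ 3 := by norm_num
          _ < _ := h5
      have h4 : Real.exp (-3) = (Real.exp 3)⁻¹ := by
        rw [← Real.exp_neg]
      rw [h4]
      rw [inv_lt_iff_one_lt_mul₀ (Real.exp_pos 3)]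
      linarith [h2]
    have hkey : Real.sqrt 2 * Real.sqrt π * (y ^ 3 * Real.exp (-y)) < 3.4 := by
      have hb : Real.sqrt 2 * Real.sqrt π < 2.50665 := by
        have h9 := mul_lt_mul'' hs2lt hsplt (Real.sqrt_nonneg 2) (Real.sqrt_nonneg π)
        calc Real.sqrt 2 * Real.sqrt π < 1.41422 * 1.77246 := h9
          _ ≤ 2.50665 := by norm_num
      have hd : 27 * Real.exp (-3) < 1.3443 := by linarith [hexp3]
      have hX : y ^ 3 * Real.exp (-y) ≤ 1.3443 := by linarith [hy3, hd]
      have hsp_pos : (0:ℝ) ≤ Real.sqrt 2 * Real.sqrt π := by positivity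
      calc Real.sqrt 2 * Real.sqrt π * (y ^ 3 * Real.exp (-y))
          ≤ Real.sqrt 2 * Real.sqrt π * 1.3443 := mul_le_mul_of_nonneg_left hX hsp_pos
        _ < 2.50665 * 1.3443 := by
            exact mul_lt_mul_of_pos_right hb (by norm_num)
        _ ≤ 3.4 := by norm_num
    -- rewrite the rpow
    have hrpow : y ^ (-(7 : ℝ) / 2) = (y ^ 3 * Real.sqrt y)⁻¹ := by
      have h1 : y ^ (-(7 : ℝ) / 2) = (y ^ ((7 : ℝ) / 2))⁻¹ := by
        rw [← Real.rpow_neg hy.le]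
        norm_num
      have h2 : y ^ ((7 : ℝ) / 2) = y ^ 3 * Real.sqrt y := by
        rw [show (7 : ℝ) / 2 = (3 : ℕ) + (1 / 2 : ℝ) by norm_num,
          Real.rpow_add hy, Real.rpow_natCast, ← Real.rpow_natCast y 3]
        rw [Real.rpow_natCast]
        rw [← Real.sqrt_eq_rpow]
      rw [h1, h2]
    rw [hrpow, hC_def]
    have hA : (1 / 2 : ℝ) * (Real.exp (-y) * (Real.sqrt 2 / Real.sqrt y) * Real.sqrt π)
        = (Real.sqrt 2 * Real.sqrt π * (y ^ 3 * Real.exp (-y))) / (2 * y ^ 3 * Real.sqrt y) := by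
      field_simp
    have hB : (1.7 : ℝ) * (y ^ 3 * Real.sqrt y)⁻¹ = 3.4 / (2 * y ^ 3 * Real.sqrt y) := by
      field_simp
      ring
    rw [hA, hB]
    gcongr
  calc (1 / 2) * ∫ t in Set.Ioi (0 : ℝ), Real.exp (-t - y ^ 2 / (4 * t)) / t
      ≤ (1 / 2) * (C * Real.sqrt π) := by
        rw [← hval]
        exact mul_le_mul_of_nonneg_left hmono (by norm_num)
    _ < 1.7 * y ^ (-(7 : ℝ) / 2) := hnum
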